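/- Let n > 0, x > 0, δ ∈ ℝ and y = x²/(n+x²). Then Q_n(x;δ) = (δ n e^{-δ²/2}/(2√(2π))) ∫₀^y (1-t)^{n/2-1} ₁F₁(n/2+1; 3/2; δ²t/2) dt. -/

import Mathlib

open Real MeasureTheory

/-- Complementary error function. -/
noncomputable def erfc (z : ℝ) : ℝ := (2 / Real.sqrt π) * ∫ t in Set.Ioi z, Real.exp (-t^2)

/-- Error function. -/
noncomputable def erf (z : ℝ) : ℝ := 1 - erfc z

/-- Beta function B(a,b) = Γ(a)Γ(b)/Γ(a+b). -/
noncomputable def betaFn (a b : ℝ) : ℝ := Real.Gamma a * Real.Gamma b / Real.Gamma (a + b)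

/-- Regularized incomplete beta function I_y(a,b). -/
noncomputable def regIncBeta (y a b : ℝ) : ℝ :=
  (1 / betaFn a b) * ∫ t in (0:ℝ)..y, t ^ (a - 1) * (1 - t) ^ (b - 1)

/-- The function P_n(x;δ). -/
noncomputable def Pnt (n x δ : ℝ) : ℝ :=
  (1/2) * Real.exp (-δ^2/2) *
    ∑' j : ℕ, ((δ^2/2)^j / (Nat.factorial j : ℝ)) *
      regIncBeta (x^2/(n + x^2)) ((j : ℝ) + 1/2) (n/2)

/-- The function Q_n(x;δ). -/
noncomputable def Qnt (n x δ : ℝ) : ℝ :=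
  (1/2) * Real.exp (-δ^2/2) *
    ∑' j : ℕ, (δ / Real.sqrt 2) * ((δ^2/2)^j / Real.Gamma ((j : ℝ) + 3/2)) *
      regIncBeta (x^2/(n + x^2)) ((j : ℝ) + 1) (n/2)

/-- The noncentral t cumulative distribution function F_n(x;δ). -/
noncomputable def Fnt (n x δ : ℝ) : ℝ :=
  (1/2) * erfc (δ / Real.sqrt 2) + Pnt n x δ + Qnt n x δ

/-- The function R_n(x;δ) = erfc(δ/√2)/2 + Q_n(x;δ) − P_n(x;δ). -/
noncomputable def Rnt (n x δ : ℝ) : ℝ :=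
  (1/2) * erfc (δ / Real.sqrt 2) + Qnt n x δ - Pnt n x δ

/-- Kummer's confluent hypergeometric function ₁F₁(a;b;z). -/
noncomputable def kummerM (a b z : ℝ) : ℝ :=
  ∑' k : ℕ, (Real.Gamma (a + k) / Real.Gamma a) / (Real.Gamma (b + k) / Real.Gamma b) *
    z^k / (Nat.factorial k : ℝ)


lemma gammaRatio_le (a : ℝ) (ha : 1 ≤ a) (k : ℕ) :
    Real.Gamma (a + k) / Real.Gamma (3/2 + k) ≤ (Real.Gamma a / Real.Gamma (3/2)) * a ^ k := by
  induction k with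
  | zero => simp
  | succ k ih =>
    have ha0 : 0 < a := lt_of_lt_of_le one_pos ha
    have hak : (0:ℝ) < a + k := by positivity
    have hbk : (0:ℝ) < 3/2 + k := by positivity
    have h1 : Real.Gamma (a + (k+1:ℕ)) = (a + k) * Real.Gamma (a + k) := by
      push_cast
      rw [show a + ((k:ℝ)+1) = (a + k) + 1 by ring, Real.Gamma_add_one (ne_of_gt hak)]
    have h2 : Real.Gamma (3/2 + (k+1:ℕ)) = (3/2 + k) * Real.Gamma (3/2 + k) := by
      push_cast
      rw [show (3:ℝ)/2 + ((k:ℝ)+1) = (3/2 + k) + 1 by ring, Real.Gamma_add_one (ne_of_gt hbk)]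
    have hg1 : 0 < Real.Gamma (a + k) := Real.Gamma_pos_of_pos hak
    have hg2 : 0 < Real.Gamma (3/2 + k) := Real.Gamma_pos_of_pos hbk
    have hratio : (a + k) / (3/2 + k) ≤ a := by
      rw [div_le_iff₀ hbk]; nlinarith
    have : Real.Gamma (a + (k+1:ℕ)) / Real.Gamma (3/2 + (k+1:ℕ))
        = (a + k) / (3/2 + k) * (Real.Gamma (a + k) / Real.Gamma (3/2 + k)) := by
      rw [h1, h2]; field_simp
    rw [this, pow_succ]
    have hnn : 0 ≤ Real.Gamma (a + k) / Real.Gamma (3/2 + k) := by positivity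
    calc (a + k) / (3/2 + k) * (Real.Gamma (a + k) / Real.Gamma (3/2 + k))
        ≤ a * ((Real.Gamma a / Real.Gamma (3/2)) * a ^ k) := by
          apply mul_le_mul hratio ih hnn ha0.le
      _ = Real.Gamma a / Real.Gamma (3/2) * (a ^ k * a) := by ring

lemma summable_g (a z : ℝ) (ha : 1 ≤ a) (hz : 0 ≤ z) :
    Summable (fun k : ℕ => (Real.Gamma (a + k) / Real.Gamma a) /
      (Real.Gamma (3/2 + k) / Real.Gamma (3/2)) * z ^ k / (Nat.factorial k : ℝ)) := by
  have ha0 : 0 < a := lt_of_lt_of_le one_pos ha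
  have hga : 0 < Real.Gamma a := Real.Gamma_pos_of_pos ha0
  have hgb : 0 < Real.Gamma (3/2) := Real.Gamma_pos_of_pos (by norm_num)
  refine Summable.of_nonneg_of_le ?_ ?_ (Real.summable_pow_div_factorial (a*z))
  · intro k
    have h1 : 0 < Real.Gamma (a + k) := Real.Gamma_pos_of_pos (by positivity)
    have h2 : 0 < Real.Gamma (3/2 + k) := Real.Gamma_pos_of_pos (by positivity)
    positivity
  · intro k
    have h2 : 0 < Real.Gamma (3/2 + k) := Real.Gamma_pos_of_pos (by positivity)
    have key := gammaRatio_le a ha k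
    have : (Real.Gamma (a + k) / Real.Gamma a) / (Real.Gamma (3/2 + k) / Real.Gamma (3/2))
        = (Real.Gamma (a + k) / Real.Gamma (3/2 + k)) * (Real.Gamma (3/2) / Real.Gamma a) := by
      field_simp
    rw [this]
    have hle : (Real.Gamma (a + k) / Real.Gamma (3/2 + k)) * (Real.Gamma (3/2) / Real.Gamma a)
        ≤ a ^ k := by
      calc (Real.Gamma (a + k) / Real.Gamma (3/2 + k)) * (Real.Gamma (3/2) / Real.Gamma a)
          ≤ ((Real.Gamma a / Real.Gamma (3/2)) * a ^ k) * (Real.Gamma (3/2) / Real.Gamma a) := by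
            apply mul_le_mul_of_nonneg_right key (by positivity)
        _ = a ^ k := by field_simp
    rw [mul_pow]
    gcongr

lemma interchange (a p z y : ℝ) (ha : 1 ≤ a) (hz : 0 ≤ z) (hy0 : 0 < y) (hy1 : y < 1) :
    ∫ t in Set.Ioc (0:ℝ) y, (1-t)^p * kummerM a (3/2) (z*t)
      = ∑' k : ℕ, (Real.Gamma (a + k) / Real.Gamma a) /
          (Real.Gamma (3/2 + k) / Real.Gamma (3/2)) * z ^ k / (Nat.factorial k : ℝ) *
          ∫ t in Set.Ioc (0:ℝ) y, t^k * (1-t)^p := by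
  have ha0 : 0 < a := lt_of_lt_of_le one_pos ha
  set c : ℕ → ℝ := fun k => (Real.Gamma (a + k) / Real.Gamma a) /
      (Real.Gamma (3/2 + k) / Real.Gamma (3/2)) * z ^ k / (Nat.factorial k : ℝ) with hc
  have hcnn : ∀ k, 0 ≤ c k := by
    intro k
    have h1 : 0 < Real.Gamma (a + k) := Real.Gamma_pos_of_pos (by positivity)
    have h2 : 0 < Real.Gamma (3/2 + k) := Real.Gamma_pos_of_pos (by positivity)
    have h3 : 0 < Real.Gamma a := Real.Gamma_pos_of_pos ha0
    have h4 : 0 < Real.Gamma (3/2) := Real.Gamma_pos_of_pos (by norm_num)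
    simp only [hc]
    positivity
  set F : ℕ → ℝ → ℝ := fun k t => c k * (t^k * (1-t)^p) with hF
  -- pointwise identity
  have hpt : ∀ t ∈ Set.Ioc (0:ℝ) y, (1-t)^p * kummerM a (3/2) (z*t) = ∑' k, F k t := by
    intro t ht
    rw [kummerM, ← tsum_mul_left]
    apply tsum_congr
    intro k
    simp only [hF, hc]
    rw [mul_pow]
    ring
  -- integrability
  have hint : ∀ k : ℕ, IntegrableOn (F k) (Set.Ioc (0:ℝ) y) := by
    intro k
    have hcont : ContinuousOn (fun t : ℝ => t^k * (1-t)^p) (Set.Icc 0 y) := by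
      apply ContinuousOn.mul (continuous_pow k).continuousOn
      apply ContinuousOn.rpow_const (by fun_prop)
      intro t ht
      left
      have := ht.2
      intro h
      have : t = 1 := by linarith [sub_eq_zero.mp h]
      linarith [ht.2, hy1]
    have := (hcont.integrableOn_Icc (μ := volume)).mono_set Set.Ioc_subset_Icc_self
    exact this.const_mul (c k)
  -- bound
  set M : ℝ := max 1 ((1-y)^p) with hM
  have hM0 : 0 ≤ M := le_trans zero_le_one (le_max_left _ _)
  have hbound : ∀ k : ℕ, ∀ t ∈ Set.Ioc (0:ℝ) y, ‖F k t‖ ≤ c k * M := by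
    intro k t ht
    have ht0 : 0 < t := ht.1
    have hty : t ≤ y := ht.2
    have h1t : 0 < 1 - t := by linarith
    have h1y : 0 < 1 - y := by linarith
    have hFnn : 0 ≤ F k t := by
      have : (0:ℝ) ≤ (1-t)^p := Real.rpow_nonneg h1t.le p
      have := hcnn k
      simp only [hF]; positivity
    rw [Real.norm_of_nonneg hFnn]
    simp only [hF]
    have htk : t^k ≤ 1 := pow_le_one₀ ht0.le (by linarith)
    have hrp : (1-t)^p ≤ M := by
      rcases le_or_gt 0 p with hp | hp
      · exact le_trans (Real.rpow_le_one h1t.le (by linarith) hp) (le_max_left _ _)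
      · refine le_trans ?_ (le_max_right _ _)
        exact Real.rpow_le_rpow_of_nonpos h1y (by linarith) hp.le
    calc c k * (t^k * (1-t)^p) ≤ c k * (1 * M) := by
          apply mul_le_mul_of_nonneg_left _ (hcnn k)
          exact mul_le_mul htk hrp (Real.rpow_nonneg h1t.le p) zero_le_one
      _ = c k * M := by ring
  have hμ : volume (Set.Ioc (0:ℝ) y) < ⊤ := by
    rw [Real.volume_Ioc]; exact ENNReal.ofReal_lt_top
  have hnorm_int : ∀ k : ℕ, ∫ t in Set.Ioc (0:ℝ) y, ‖F k t‖ ≤ c k * M * y := by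
    intro k
    have h1 : ∫ t in Set.Ioc (0:ℝ) y, ‖F k t‖ ≤ ∫ _ in Set.Ioc (0:ℝ) y, c k * M := by
      apply setIntegral_mono_on (hint k).norm
        (integrableOn_const hμ.ne) measurableSet_Ioc (hbound k)
    calc ∫ t in Set.Ioc (0:ℝ) y, ‖F k t‖ ≤ ∫ _ in Set.Ioc (0:ℝ) y, c k * M := h1
      _ = (volume (Set.Ioc (0:ℝ) y)).toReal * (c k * M) := by
          rw [setIntegral_const, smul_eq_mul, measureReal_def]
      _ = c k * M * y := by
          rw [Real.volume_Ioc, ENNReal.toReal_ofReal (by linarith)]; ring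
  have hsum : Summable (fun k => ∫ t in Set.Ioc (0:ℝ) y, ‖F k t‖) := by
    apply Summable.of_nonneg_of_le
      (fun k => integral_nonneg fun t => norm_nonneg _) hnorm_int
    simpa [mul_assoc] using (summable_g a z ha hz).mul_right (M * y)
  rw [setIntegral_congr_fun measurableSet_Ioc hpt,
    ← integral_tsum_of_summable_integral_norm hint hsum]
  apply tsum_congr
  intro k
  simp only [hF]
  rw [MeasureTheory.integral_const_mul]

theorem Qnt_integral_rep (n x δ : ℝ) (hn : 0 < n) (hx : 0 < x)
    (y : ℝ) (hy : y = x^2 / (n + x^2)) :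
    Qnt n x δ =
      (δ * n * Real.exp (-δ^2/2) / (2 * Real.sqrt (2 * π))) *
        ∫ t in (0:ℝ)..y, (1 - t) ^ (n/2 - 1) * kummerM (n/2 + 1) (3/2) (δ^2 * t / 2) := by
  have hnx : (0:ℝ) < n + x^2 := by positivity
  have hy0 : 0 < y := by rw [hy]; positivity
  have hy1 : y < 1 := by rw [hy, div_lt_one hnx]; nlinarith
  have ha1 : (1:ℝ) ≤ n/2 + 1 := by linarith
  have hrhs : (∫ t in (0:ℝ)..y, (1 - t) ^ (n/2 - 1) * kummerM (n/2 + 1) (3/2) (δ^2 * t / 2))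
      = ∫ t in Set.Ioc (0:ℝ) y, (1-t)^(n/2-1) * kummerM (n/2+1) (3/2) ((δ^2/2)*t) := by
    rw [intervalIntegral.integral_of_le hy0.le]
    apply setIntegral_congr_fun measurableSet_Ioc
    intro t _
    congr 1
    ring_nf
  have hIeq : ∀ j : ℕ, (∫ t in (0:ℝ)..y, t ^ (((j:ℝ)+1)-1) * (1-t)^(n/2-1))
      = ∫ t in Set.Ioc (0:ℝ) y, t^j * (1-t)^(n/2-1) := by
    intro j
    rw [intervalIntegral.integral_of_le hy0.le]
    apply setIntegral_congr_fun measurableSet_Ioc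
    intro t _
    show t ^ (((j:ℝ)+1)-1) * (1-t)^(n/2-1) = t^j * (1-t)^(n/2-1)
    rw [show ((j:ℝ)+1)-1 = ((j:ℕ):ℝ) by push_cast; ring, Real.rpow_natCast]
  rw [hrhs, interchange (n/2+1) (n/2-1) (δ^2/2) y ha1 (by positivity) hy0 hy1]
  simp only [Qnt, regIncBeta, betaFn]
  rw [← hy, ← tsum_mul_left, ← tsum_mul_left]
  refine tsum_congr fun j => ?_
  rw [hIeq j]
  -- algebra
  have hG32 : Real.Gamma (3/2) = Real.sqrt π / 2 := by
    rw [show (3:ℝ)/2 = 1/2 + 1 by norm_num, Real.Gamma_add_one (by norm_num),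
      Real.Gamma_one_half_eq]
    ring
  have hGj1 : Real.Gamma ((j:ℝ)+1) = (Nat.factorial j : ℝ) := Real.Gamma_nat_eq_factorial j
  have hGa : Real.Gamma (n/2+1) = (n/2) * Real.Gamma (n/2) := by
    rw [Real.Gamma_add_one (by positivity)]
  have hGswap : Real.Gamma ((j:ℝ)+1+n/2) = Real.Gamma (n/2+1+(j:ℝ)) := by
    congr 1; ring
  have hGswap2 : Real.Gamma ((j:ℝ)+3/2) = Real.Gamma (3/2+(j:ℝ)) := by
    congr 1; ring
  have hs2 : Real.sqrt (2*π) = Real.sqrt 2 * Real.sqrt π := Real.sqrt_mul (by norm_num) π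
  have hGn2 : (0:ℝ) < Real.Gamma (n/2) := Real.Gamma_pos_of_pos (by positivity)
  have hGaj : (0:ℝ) < Real.Gamma (n/2+1+(j:ℝ)) := Real.Gamma_pos_of_pos (by positivity)
  have hGbj : (0:ℝ) < Real.Gamma (3/2+(j:ℝ)) := Real.Gamma_pos_of_pos (by positivity)
  have hfj : (0:ℝ) < (Nat.factorial j : ℝ) := by positivity
  have hsp : (0:ℝ) < Real.sqrt π := Real.sqrt_pos.mpr Real.pi_pos
  have hs2' : (0:ℝ) < Real.sqrt 2 := by positivity
  rw [hGj1, hGa, hGswap, hGswap2, hG32, hs2]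
  set I := ∫ t in Set.Ioc (0:ℝ) y, t^j * (1-t)^(n/2-1) with hI
  field_simp
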